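/- Let f be a partial-functional binary relation on V (f(u,v) ∧ f(u,w) → v = w) with reflexive transitive closure f*. Then the points reachable from any node are linearly ordered: for all u, v, w, if f*(u,v) and f*(u,w), then f*(v,w) or f*(w,v). -/
import Mathlib


theorem stmt_10 {V : Type*} (f : V → V → Prop)
    (hfunc : ∀ u v w : V, f u v → f u w → v = w) :
    ∀ u v w : V, Relation.ReflTransGen f u v → Relation.ReflTransGen f u w →
      Relation.ReflTransGen f v w ∨ Relation.ReflTransGen f w v := by
  intro u v w huv
  induction huv using Relation.ReflTransGen.head_induction_on with
  | refl => intro huw; exact Or.inl huw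
  | head hux _ ih =>
    intro huw
    rcases huw.cases_head with rfl | ⟨y, huy, hyw⟩
    · exact Or.inr (Relation.ReflTransGen.head hux (by assumption))
    · cases hfunc _ _ _ hux huy; exact ih hyw
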